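/- Let r ∈ (0,1), u ∈ (0,1), and θ₀ ∈ ℝ with cos θ₀·sin θ₀ ≠ 0. Set C := 1 − (1+r)cos²θ₀ and define the quartic polynomial P(X) := C²·(1 − u² − X)·X·(1 + (r−1)X)² − cos²θ₀·sin²θ₀·(1 − u² − 2X + (1−r²)X²)². Then P has at most two roots in the interval [0,1]: the set {X ∈ [0,1] : P(X) = 0} has at most two elements. -/

import Mathlib

lemma quartic_Wpos (r v x : ℝ) (hr0 : 0 < r) (hr1 : r < 1) (hv1 : v < 1)
    (hx0 : 0 < x) (hxv : x < v) :
    0 < (1 - (1 - r) * x) *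
      (v * ((1 - v) * ((1 - r) * x * (1 - (1 - r) * x))
            + (v - (1 - r) * x) * (1 - (1 - r) * x) ^ 2)
        + 2 * ((1 - r) * x) ^ 2 * (1 - v) * (v - x)) := by
  have hv0 : 0 < v := lt_trans hx0 hxv
  have hy0 : 0 < (1 - r) * x := mul_pos (by linarith) hx0
  have hyx : (1 - r) * x < x := by nlinarith
  have hyv : (1 - r) * x < v := by linarith
  have h1y : (1 - r) * x < 1 := by linarith
  have t1 : 0 < (1 - v) * ((1 - r) * x * (1 - (1 - r) * x)) :=
    mul_pos (by linarith) (mul_pos hy0 (by linarith))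
  have t2 : 0 < (v - (1 - r) * x) * (1 - (1 - r) * x) ^ 2 :=
    mul_pos (by linarith) (pow_pos (by linarith) 2)
  have t3 : 0 < 2 * ((1 - r) * x) ^ 2 * (1 - v) * (v - x) :=
    mul_pos (mul_pos (by positivity) (by linarith)) (by linarith)
  exact mul_pos (by linarith) (add_pos (mul_pos hv0 (add_pos t1 t2)) t3)

lemma quartic_hasDeriv (r v x : ℝ)
    (hQx : v - 2 * x + (1 - r ^ 2) * x ^ 2 ≠ 0) :
    HasDerivAt (fun X : ℝ => ((v - X) * X * (1 + (r - 1) * X) ^ 2) /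
        (v - 2 * X + (1 - r ^ 2) * X ^ 2) ^ 2)
      ((v - 2 * x + (1 - r ^ 2) * x ^ 2) *
          ((1 - (1 - r) * x) *
            (v * ((1 - v) * ((1 - r) * x * (1 - (1 - r) * x))
                  + (v - (1 - r) * x) * (1 - (1 - r) * x) ^ 2)
              + 2 * ((1 - r) * x) ^ 2 * (1 - v) * (v - x)))
        / ((v - 2 * x + (1 - r ^ 2) * x ^ 2) ^ 2) ^ 2) x := by
  have h1 : HasDerivAt (fun X : ℝ => v - X) (-1) x := by
    simpa using (hasDerivAt_id x).const_sub v
  have h2 : HasDerivAt (fun X : ℝ => (v - X) * X) ((-1) * x + (v - x) * 1) x :=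
    h1.mul (hasDerivAt_id x)
  have h3 : HasDerivAt (fun X : ℝ => 1 + (r - 1) * X) (r - 1) x := by
    simpa using ((hasDerivAt_id x).const_mul (r - 1)).const_add 1
  have hn := h2.mul (h3.pow 2)
  have h5 : HasDerivAt (fun X : ℝ => v - 2 * X) (-(2 * 1)) x := by
    simpa using ((hasDerivAt_id x).const_mul 2).const_sub v
  have h6 : HasDerivAt (fun X : ℝ => (1 - r ^ 2) * X ^ 2)
      ((1 - r ^ 2) * ((2 : ℕ) * x ^ (2 - 1))) x :=
    (hasDerivAt_pow 2 x).const_mul (1 - r ^ 2)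
  have hQ : HasDerivAt (fun X : ℝ => v - 2 * X + (1 - r ^ 2) * X ^ 2)
      (-(2 * 1) + (1 - r ^ 2) * ((2 : ℕ) * x ^ (2 - 1))) x := h5.add h6
  have H := hn.div (hQ.pow 2) (pow_ne_zero 2 hQx)
  refine H.congr_deriv ?_
  simp only [Pi.pow_apply, Pi.mul_apply]
  push_cast
  ring

lemma quartic_aux (C r v K : ℝ) (hr0 : 0 < r) (hr1 : r < 1)
    (hv0 : 0 < v) (hv1 : v < 1) (hK : 0 < K) :
    {X ∈ Set.Icc (0 : ℝ) 1 |
        C ^ 2 * (v - X) * X * (1 + (r - 1) * X) ^ 2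
          - K * (v - 2 * X + (1 - r ^ 2) * X ^ 2) ^ 2 = 0}.encard ≤ 2 := by
  set S := {X ∈ Set.Icc (0 : ℝ) 1 |
        C ^ 2 * (v - X) * X * (1 + (r - 1) * X) ^ 2
          - K * (v - 2 * X + (1 - r ^ 2) * X ^ 2) ^ 2 = 0} with hS
  -- strict antitonicity of Q on [0,1]
  have hQanti : ∀ x ∈ Set.Icc (0:ℝ) 1, ∀ y ∈ Set.Icc (0:ℝ) 1, x < y →
      v - 2 * y + (1 - r ^ 2) * y ^ 2 < v - 2 * x + (1 - r ^ 2) * x ^ 2 := by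
    intro x hx y hy hxy
    have hxy2 : (0:ℝ) ≤ x + y := by linarith [hx.1, hy.1]
    have h2 : 0 < 2 - (1 - r ^ 2) * (x + y) := by
      nlinarith [hx.1, hy.2, mul_nonneg (sq_nonneg r) hxy2]
    nlinarith [mul_pos (show (0:ℝ) < y - x by linarith) h2]
  have hQv : v - 2 * v + (1 - r ^ 2) * v ^ 2 < 0 := by
    nlinarith [mul_pos hv0 (show (0:ℝ) < 1 - (1 - r ^ 2) * v by
      nlinarith [mul_nonneg (sq_nonneg r) hv0.le])]
  -- root of Q in (0, v)
  obtain ⟨X₁, hX₁mem, hQX₁⟩ : ∃ X₁ ∈ Set.Ioo (0:ℝ) v,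
      v - 2 * X₁ + (1 - r ^ 2) * X₁ ^ 2 = 0 := by
    have hc : ContinuousOn (fun X : ℝ => v - 2 * X + (1 - r ^ 2) * X ^ 2) (Set.Icc 0 v) := by
      fun_prop
    have h0 : (0:ℝ) ∈ Set.Ioo (v - 2 * v + (1 - r ^ 2) * v ^ 2)
        (v - 2 * 0 + (1 - r ^ 2) * 0 ^ 2) := by
      constructor
      · exact hQv
      · norm_num [hv0]
    obtain ⟨x, hx, hx0⟩ := intermediate_value_Ioo' hv0.le hc h0
    exact ⟨x, hx, hx0⟩
  obtain ⟨hX₁0, hX₁v⟩ := hX₁mem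
  have hQpos : ∀ x : ℝ, 0 < x → x < X₁ → 0 < v - 2 * x + (1 - r ^ 2) * x ^ 2 := by
    intro x h1 h2
    have := hQanti x ⟨h1.le, by linarith⟩ X₁ ⟨hX₁0.le, by linarith⟩ h2
    linarith
  have hQneg : ∀ x : ℝ, X₁ < x → x ≤ 1 → v - 2 * x + (1 - r ^ 2) * x ^ 2 < 0 := by
    intro x h1 h2
    have := hQanti X₁ ⟨hX₁0.le, by linarith⟩ x ⟨by linarith, h2⟩ h1
    linarith
  -- location of zeros
  have hloc : ∀ x ∈ S, 0 < x ∧ x < v := by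
    intro x hx
    obtain ⟨⟨hx0, hx1⟩, hPx⟩ := hx
    constructor
    · rcases eq_or_lt_of_le hx0 with h | h
      · exfalso
        rw [← h] at hPx
        nlinarith [mul_pos hK (mul_pos hv0 hv0)]
      · exact h
    · by_contra hcon
      push_neg at hcon
      have hQx : v - 2 * x + (1 - r ^ 2) * x ^ 2 < 0 := by
        rcases eq_or_lt_of_le hcon with h | h
        · rw [← h]; exact hQv
        · exact hQneg x (by linarith) hx1
      have hfirst : 0 ≤ C ^ 2 * x * (1 + (r - 1) * x) ^ 2 := by positivity
      nlinarith [mul_nonneg hfirst (show (0:ℝ) ≤ x - v by linarith),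
        mul_pos hK (mul_pos_of_neg_of_neg hQx hQx)]
  -- case C = 0
  by_cases hC : C = 0
  · refine le_trans (Set.encard_le_one_iff.mpr ?_) (by norm_num)
    intro x y hx hy
    have hQzero : ∀ z ∈ S, v - 2 * z + (1 - r ^ 2) * z ^ 2 = 0 := by
      intro z hz
      obtain ⟨_, hPz⟩ := hz
      rw [hC] at hPz
      have h2 : K * (v - 2 * z + (1 - r ^ 2) * z ^ 2) ^ 2 = 0 := by
        linear_combination -hPz
      have h3 := (mul_eq_zero.mp h2).resolve_left (ne_of_gt hK)
      exact pow_eq_zero_iff (two_ne_zero).elim |>.mp h3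
    have hQx := hQzero x hx
    have hQy := hQzero y hy
    by_contra hne
    rcases lt_or_gt_of_ne hne with h | h
    · have := hQanti x hx.1 y hy.1 h
      rw [hQx, hQy] at this; exact lt_irrefl _ this
    · have := hQanti y hy.1 x hx.1 h
      rw [hQx, hQy] at this; exact lt_irrefl _ this
  -- case C ≠ 0
  · -- zeros are not at X₁, and g takes value K / C² at zeros
    have hA : ∀ x : ℝ, 0 < x → x < v → 0 < 1 + (r - 1) * x := by
      intro x h1 h2
      nlinarith [mul_pos hr0 h1]
    have hQne : ∀ x ∈ S, v - 2 * x + (1 - r ^ 2) * x ^ 2 ≠ 0 := by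
      intro x hx hQx
      obtain ⟨h0, h1⟩ := hloc x hx
      obtain ⟨_, hPx⟩ := hx
      rw [hQx] at hPx
      have hApos := hA x h0 h1
      have : C ^ 2 * (v - x) * x * (1 + (r - 1) * x) ^ 2 > 0 := by
        have hC2 : 0 < C ^ 2 := by positivity
        exact mul_pos (mul_pos (mul_pos hC2 (by linarith : (0:ℝ) < v - x)) h0)
          (pow_pos hApos 2)
      nlinarith
  -- value of g at zeros
    have hgval : ∀ x ∈ S, ((v - x) * x * (1 + (r - 1) * x) ^ 2) /
        (v - 2 * x + (1 - r ^ 2) * x ^ 2) ^ 2 = K / C ^ 2 := by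
      intro x hx
      have hQx := hQne x hx
      obtain ⟨_, hPx⟩ := hx
      rw [div_eq_div_iff (pow_ne_zero 2 hQx) (pow_ne_zero 2 hC)]
      linear_combination hPx
    -- monotonicity of g on (0, X₁)
    have hmono : StrictMonoOn (fun X : ℝ => ((v - X) * X * (1 + (r - 1) * X) ^ 2) /
        (v - 2 * X + (1 - r ^ 2) * X ^ 2) ^ 2) (Set.Ioo 0 X₁) := by
      apply strictMonoOn_of_deriv_pos (convex_Ioo 0 X₁)
      · apply ContinuousOn.div (by fun_prop) (by fun_prop)
        intro x hx
        exact pow_ne_zero 2 (ne_of_gt (hQpos x hx.1 hx.2))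
      · intro x hx
        rw [interior_Ioo] at hx
        obtain ⟨h0, h1⟩ := hx
        have hQx := hQpos x h0 h1
        have hder := quartic_hasDeriv r v x (ne_of_gt hQx)
        rw [hder.deriv]
        apply div_pos
        · exact mul_pos hQx (quartic_Wpos r v x hr0 hr1 hv1 h0 (by linarith))
        · positivity
    -- antitonicity of g on (X₁, v)
    have hanti : StrictAntiOn (fun X : ℝ => ((v - X) * X * (1 + (r - 1) * X) ^ 2) /
        (v - 2 * X + (1 - r ^ 2) * X ^ 2) ^ 2) (Set.Ioo X₁ v) := by
      apply strictAntiOn_of_deriv_neg (convex_Ioo X₁ v)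
      · apply ContinuousOn.div (by fun_prop) (by fun_prop)
        intro x hx
        exact pow_ne_zero 2 (ne_of_lt (hQneg x hx.1 (by linarith [hx.2])))
      · intro x hx
        rw [interior_Ioo] at hx
        obtain ⟨h0, h1⟩ := hx
        have hQx := hQneg x h0 (by linarith)
        have hder := quartic_hasDeriv r v x (ne_of_lt hQx)
        rw [hder.deriv]
        apply div_neg_of_neg_of_pos
        · exact mul_neg_of_neg_of_pos hQx
            (quartic_Wpos r v x hr0 hr1 hv1 (by linarith [hX₁0]) h1)
        · have : (v - 2 * x + (1 - r ^ 2) * x ^ 2) ≠ 0 := ne_of_lt hQx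
          positivity
    -- S splits into two subsingleton pieces
    have hsplit : S ⊆ (S ∩ Set.Ioo 0 X₁) ∪ (S ∩ Set.Ioo X₁ v) := by
      intro x hx
      obtain ⟨h0, h1⟩ := hloc x hx
      rcases lt_trichotomy x X₁ with h | h | h
      · exact Or.inl ⟨hx, h0, h⟩
      · exact absurd (h ▸ hQX₁) (hQne x hx)
      · exact Or.inr ⟨hx, h, h1⟩
    have hone : ∀ (T : Set ℝ) (I : Set ℝ), (∀ a ∈ I, ∀ b ∈ I, a < b →
        (fun X : ℝ => ((v - X) * X * (1 + (r - 1) * X) ^ 2) /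
          (v - 2 * X + (1 - r ^ 2) * X ^ 2) ^ 2) a ≠
        (fun X : ℝ => ((v - X) * X * (1 + (r - 1) * X) ^ 2) /
          (v - 2 * X + (1 - r ^ 2) * X ^ 2) ^ 2) b) →
        (S ∩ I).encard ≤ 1 := by
      intro T I hinj
      rw [Set.encard_le_one_iff]
      intro a b ha hb
      by_contra hne
      rcases lt_or_gt_of_ne hne with h | h
      · exact hinj a ha.2 b hb.2 h (by
          simp only []
          rw [hgval a ha.1, hgval b hb.1])
      · exact hinj b hb.2 a ha.2 h (by
          simp only []
          rw [hgval a ha.1, hgval b hb.1])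
    calc S.encard ≤ ((S ∩ Set.Ioo 0 X₁) ∪ (S ∩ Set.Ioo X₁ v)).encard :=
          Set.encard_mono hsplit
      _ ≤ (S ∩ Set.Ioo 0 X₁).encard + (S ∩ Set.Ioo X₁ v).encard :=
          Set.encard_union_le _ _
      _ ≤ 1 + 1 := add_le_add
          (hone S _ (fun a ha b hb hab => ne_of_lt (hmono ha hb hab)))
          (hone S _ (fun a ha b hb hab => ne_of_gt (hanti ha hb hab)))
      _ = 2 := by norm_num

/-- The quartic polynomial `P(X) = C²·(1−u²−X)·X·(1+(r−1)X)² − cos²θ₀·sin²θ₀·(1−u²−2X+(1−r²)X²)²`,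
with `C = 1 − (1+r)cos²θ₀`, has at most two roots in `[0,1]`. -/
theorem quartic_at_most_two_roots (r u θ₀ : ℝ) (hr : r ∈ Set.Ioo (0 : ℝ) 1)
    (hu : u ∈ Set.Ioo (0 : ℝ) 1) (hθ₀ : Real.cos θ₀ * Real.sin θ₀ ≠ 0) :
    {X ∈ Set.Icc (0 : ℝ) 1 |
        (1 - (1 + r) * Real.cos θ₀ ^ 2) ^ 2 * (1 - u ^ 2 - X) * X * (1 + (r - 1) * X) ^ 2
          - Real.cos θ₀ ^ 2 * Real.sin θ₀ ^ 2 *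
              (1 - u ^ 2 - 2 * X + (1 - r ^ 2) * X ^ 2) ^ 2 = 0}.encard ≤ 2 := by
  obtain ⟨hr0, hr1⟩ := hr
  obtain ⟨hu0, hu1⟩ := hu
  have hcos : Real.cos θ₀ ≠ 0 := fun h => hθ₀ (by rw [h]; ring)
  have hsin : Real.sin θ₀ ≠ 0 := fun h => hθ₀ (by rw [h]; ring)
  have hK : 0 < Real.cos θ₀ ^ 2 * Real.sin θ₀ ^ 2 :=
    mul_pos (lt_of_le_of_ne (sq_nonneg _) (Ne.symm (pow_ne_zero 2 hcos)))
      (lt_of_le_of_ne (sq_nonneg _) (Ne.symm (pow_ne_zero 2 hsin)))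
  exact quartic_aux (1 - (1 + r) * Real.cos θ₀ ^ 2) r (1 - u ^ 2)
    (Real.cos θ₀ ^ 2 * Real.sin θ₀ ^ 2) hr0 hr1 (by nlinarith) (by nlinarith) hK
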